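/- Let Λ ∈ (0,1), let α > 0 with α ≠ 1, and set β = α − 1. Let ρ be a d×d complex Hermitian positive semidefinite matrix with trace 1 whose eigenvalues λ_1,…,λ_d each satisfy λ_j = 0 or λ_j ≥ Λ. Let K be a positive integer such that |C(β,k)| ≤ 1 for every integer k > K. Then |∑_j λ_j^α − 1 − ∑_{k=1}^{K} C(β,k)·tr(ρ(ρ−I)^k)| ≤ (1−Λ)^{K+1}/Λ, where λ^α denotes the real power with the convention 0^α = 0. -/

import Mathlib

open Matrix ComplexOrder

/-- The generalized binomial coefficient `C(β,k) = β(β−1)⋯(β−k+1)/k!`. -/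
noncomputable def genBinom (β : ℝ) (k : ℕ) : ℝ :=
  (∏ j ∈ Finset.range k, (β - j)) / (k.factorial : ℝ)

open Set Finset in
/-- iterated derivatives of `u ↦ (c-u)^β` within `Icc lam 1`, where `c = 1 + lam`. -/
lemma iterDeriv_aux (β lam : ℝ) (h0 : 0 < lam) (h1 : lam < 1) (n : ℕ) :
    Set.EqOn (iteratedDerivWithin n (fun u : ℝ => (1 + lam - u) ^ β) (Set.Icc lam 1))
      (fun u : ℝ => (-1 : ℝ) ^ n * (∏ j ∈ Finset.range n, (β - j)) * (1 + lam - u) ^ (β - n))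
      (Set.Icc lam 1) := by
  have hud : UniqueDiffOn ℝ (Set.Icc lam 1) := uniqueDiffOn_Icc h1
  induction n with
  | zero =>
    intro u hu
    simp [iteratedDerivWithin_zero]
  | succ n ih =>
    intro u hu
    have hpos : 0 < 1 + lam - u := by
      have := hu.2; linarith
    rw [iteratedDerivWithin_succ]
    rw [derivWithin_congr ih (ih hu)]
    have hderiv : HasDerivAt
        (fun u : ℝ => (-1 : ℝ) ^ n * (∏ j ∈ Finset.range n, (β - j)) * (1 + lam - u) ^ (β - n))
        ((-1 : ℝ) ^ (n+1) * (∏ j ∈ Finset.range (n+1), (β - j)) * (1 + lam - u) ^ (β - (n+1))) u := by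
      have h2 : HasDerivAt (fun u : ℝ => (1 + lam) - u) (-1) u :=
        (hasDerivAt_id u).const_sub (1 + lam)
      have h3 : HasDerivAt (fun u : ℝ => (1 + lam - u) ^ (β - n))
          (-1 * (β - n) * (1 + lam - u) ^ (β - n - 1)) u :=
        h2.rpow_const (Or.inl hpos.ne')
      have h4 := h3.const_mul ((-1 : ℝ) ^ n * (∏ j ∈ Finset.range n, (β - j)))
      refine h4.congr_deriv ?_
      rw [Finset.prod_range_succ]
      push_cast
      rw [show β - ((n:ℝ) + 1) = β - n - 1 by ring]
      ring
    beta_reduce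
    push_cast
    exact (hderiv.hasDerivWithinAt).derivWithin (hud u hu)

open Set Finset in
/-- Cauchy-remainder step bound. -/
lemma taylor_step (β lam : ℝ) (h0 : 0 < lam) (h1 : lam < 1) (n : ℕ) :
    |lam ^ β - ∑ k ∈ Finset.range (n+1), genBinom β k * (lam - 1) ^ k|
      ≤ (n+1) * |genBinom β (n+1)| * max 1 (lam ^ (β - 1)) * (1 - lam) ^ (n+1) := by
  set g : ℝ → ℝ := fun u => (1 + lam - u) ^ β with hg
  have hud : UniqueDiffOn ℝ (Set.Icc lam 1) := uniqueDiffOn_Icc h1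
  have hposIcc : ∀ u ∈ Set.Icc lam 1, 0 < 1 + lam - u := fun u hu => by
    have := hu.2; linarith
  -- smoothness
  have hcd : ∀ m : ℕ, ContDiffOn ℝ m g (Set.Icc lam 1) := by
    intro m
    intro u hu
    have : ContDiffAt ℝ m g u := by
      have h2 : ContDiffAt ℝ m (fun u : ℝ => 1 + lam - u) u :=
        (contDiffAt_const.sub contDiffAt_id)
      exact (Real.contDiffAt_rpow_const_of_ne (hposIcc u hu).ne').comp u h2
    exact this.contDiffWithinAt
  -- differentiability of the n-th derivative on the open interval
  have hdiff : DifferentiableOn ℝ (iteratedDerivWithin n g (Set.Icc lam 1)) (Set.Ioo lam 1) := by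
    apply DifferentiableOn.congr (f := fun u : ℝ =>
      (-1 : ℝ) ^ n * (∏ j ∈ Finset.range n, (β - j)) * (1 + lam - u) ^ (β - n))
    · intro u hu
      have hpos := hposIcc u (Set.Ioo_subset_Icc_self hu)
      have h2 : HasDerivAt (fun u : ℝ => (1 + lam) - u) (-1) u :=
        (hasDerivAt_id u).const_sub (1 + lam)
      exact (((h2.rpow_const (Or.inl hpos.ne')).const_mul _).differentiableAt).differentiableWithinAt
    · exact fun u hu => iterDeriv_aux β lam h0 h1 n (Set.Ioo_subset_Icc_self hu)
  obtain ⟨c, hc, hrem⟩ := taylor_mean_remainder_cauchy h1.ne (by rw [Set.uIcc_of_le h1.le]; exact hcd n)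
    (by rw [Set.uIcc_of_le h1.le, Set.uIoo_of_le h1.le]; exact hdiff)
  rw [Set.uIcc_of_le h1.le] at hrem
  rw [Set.uIoo_of_le h1.le] at hc
  -- the Taylor polynomial equals the genBinom sum
  have htay : taylorWithinEval g n (Set.Icc lam 1) lam 1
      = ∑ k ∈ Finset.range (n+1), genBinom β k * (lam - 1) ^ k := by
    rw [taylor_within_apply]
    apply Finset.sum_congr rfl
    intro k hk
    have hmem : lam ∈ Set.Icc lam 1 := ⟨le_refl _, h1.le⟩
    rw [iterDeriv_aux β lam h0 h1 k hmem]
    beta_reduce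
    rw [show (1 : ℝ) + lam - lam = 1 by ring, Real.one_rpow]
    rw [smul_eq_mul]
    rw [genBinom]
    have hfac : (k.factorial : ℝ) ≠ 0 := Nat.cast_ne_zero.mpr k.factorial_ne_zero
    have hpow : (1 - lam) ^ k * (-1 : ℝ) ^ k = (lam - 1) ^ k := by
      rw [← mul_pow]; ring_nf
    field_simp
    rw [← hpow]
    ring
  have hgval : g 1 = lam ^ β := by
    simp only [hg]; norm_num
  rw [htay, hgval] at hrem
  rw [hrem]
  -- now bound the remainder
  set t : ℝ := 1 + lam - c with ht
  have htmem : t ∈ Set.Icc lam 1 := by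
    constructor
    · simp only [ht]; linarith [hc.2]
    · simp only [ht]; linarith [hc.1]
  have ht0 : 0 < t := lt_of_lt_of_le h0 htmem.1
  have ht1 : t < 1 := by simp only [ht]; linarith [hc.1]
  rw [iterDeriv_aux β lam h0 h1 (n+1) (Set.Ioo_subset_Icc_self hc)]
  have h1c : (1 : ℝ) - c = t - lam := by simp only [ht]; ring
  -- rewrite everything
  have hmain : |(-1 : ℝ) ^ (n+1) * (∏ j ∈ Finset.range (n+1), (β - j)) *
      (1 + lam - c) ^ (β - (n+1 : ℕ)) * (1 - c) ^ n / n.factorial * (1 - lam)|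
      = |∏ j ∈ Finset.range (n+1), (β - j)| / n.factorial
        * (t ^ (β - (n+1 : ℕ)) * (t - lam) ^ n) * (1 - lam) := by
    rw [abs_mul, abs_div, abs_mul, abs_mul, abs_mul]
    rw [abs_pow, abs_neg, abs_one, one_pow, one_mul]
    rw [abs_of_pos (Real.rpow_pos_of_pos ht0 _)]
    rw [abs_of_nonneg (pow_nonneg (by linarith [hc.2] : (0:ℝ) ≤ 1 - c) n)]
    rw [abs_of_nonneg (by linarith : (0:ℝ) ≤ 1 - lam)]
    rw [Nat.abs_cast, h1c]
    ring
  rw [hmain]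
  -- key inequality : t ^ (β - (n+1)) * (t - lam)^n ≤ max 1 (lam^(β-1)) * (1-lam)^n
  have hkey : t ^ (β - (n+1 : ℕ)) * (t - lam) ^ n
      ≤ max 1 (lam ^ (β - 1)) * (1 - lam) ^ n := by
    have hexp : β - (n+1 : ℕ) = (β - 1) - n := by push_cast; ring
    rw [hexp, Real.rpow_sub ht0, Real.rpow_natCast]
    have heq : t ^ (β - 1) / t ^ n * (t - lam) ^ n
        = t ^ (β - 1) * ((t - lam) / t) ^ n := by
      rw [div_pow]; ring
    rw [heq]
    apply mul_le_mul
    · rcases le_or_gt 1 β with hβ | hβ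
      · exact le_max_of_le_left (Real.rpow_le_one ht0.le htmem.2 (by linarith))
      · apply le_max_of_le_right
        exact (Real.rpow_le_rpow_iff_of_neg ht0 h0 (by linarith)).mpr htmem.1
    · apply pow_le_pow_left₀
      · apply div_nonneg (by linarith [htmem.1]) ht0.le
      · rw [div_le_iff₀ ht0]
        nlinarith [htmem.1, htmem.2]
    · exact pow_nonneg (div_nonneg (by linarith [htmem.1]) ht0.le) n
    · exact le_trans zero_le_one (le_max_left _ _)
  have hgb : |∏ j ∈ Finset.range (n+1), (β - j)| / n.factorial
      = (n+1) * |genBinom β (n+1)| := by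
    rw [genBinom, abs_div, Nat.abs_cast]
    rw [Nat.factorial_succ]
    push_cast
    field_simp
  calc |∏ j ∈ Finset.range (n+1), (β - j)| / n.factorial
        * (t ^ (β - (n+1 : ℕ)) * (t - lam) ^ n) * (1 - lam)
      ≤ |∏ j ∈ Finset.range (n+1), (β - j)| / n.factorial
        * (max 1 (lam ^ (β - 1)) * (1 - lam) ^ n) * (1 - lam) := by
        apply mul_le_mul_of_nonneg_right _ (by linarith)
        exact mul_le_mul_of_nonneg_left hkey (by positivity)
    _ = (n+1) * |genBinom β (n+1)| * max 1 (lam ^ (β - 1)) * (1 - lam) ^ (n+1) := by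
        rw [hgb, pow_succ]; ring

open Filter in
/-- Tail bound for the binomial series of `lam ^ β` at `lam ∈ (0,1]`. -/
lemma binom_tail (β lam : ℝ) (h0 : 0 < lam) (h1 : lam ≤ 1) (K : ℕ)
    (hbin : ∀ k : ℕ, K < k → |genBinom β k| ≤ 1) :
    |lam ^ β - ∑ k ∈ Finset.range (K+1), genBinom β k * (lam - 1) ^ k|
      ≤ (1 - lam) ^ (K+1) / lam := by
  rcases eq_or_lt_of_le h1 with heq | hlt
  · subst heq
    rw [Real.one_rpow]
    rw [Finset.sum_eq_single 0]
    · simp [genBinom]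
    · intro k _ hk
      simp [sub_self, zero_pow hk]
    · simp
  set R : ℕ → ℝ := fun n => lam ^ β - ∑ k ∈ Finset.range (n+1), genBinom β k * (lam - 1) ^ k
    with hR
  set C : ℝ := max 1 (lam ^ (β - 1)) with hC
  have hRbound : ∀ n, |R n| ≤ (n+1) * |genBinom β (n+1)| * C * (1 - lam) ^ (n+1) :=
    fun n => taylor_step β lam h0 hlt n
  have hr0 : (0:ℝ) ≤ 1 - lam := by linarith
  have hr1 : (1:ℝ) - lam < 1 := by linarith
  -- R n → 0
  have htend0 : Tendsto (fun n : ℕ => ((n:ℝ)+1) * (1 - lam) ^ (n+1)) atTop (nhds 0) := by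
    have hsum : Summable (fun n : ℕ => (n:ℝ) * (1 - lam) ^ n) := by
      simpa using summable_pow_mul_geometric_of_norm_lt_one 1 (r := 1 - lam) (by
        rw [Real.norm_eq_abs, abs_of_nonneg hr0]; exact hr1)
    have h2 := (hsum.tendsto_atTop_zero).comp (tendsto_add_atTop_nat 1)
    exact h2.congr (fun n => by simp only [Function.comp]; push_cast; ring)
  have hRtend : Tendsto (fun n => |R n|) atTop (nhds 0) := by
    have hCpos : 0 < C := lt_of_lt_of_le one_pos (le_max_left _ _)
    apply squeeze_zero' (Filter.Eventually.of_forall (fun n => abs_nonneg _))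
    · filter_upwards [Filter.eventually_ge_atTop K] with n hn
      calc |R n| ≤ (n+1) * |genBinom β (n+1)| * C * (1 - lam) ^ (n+1) := hRbound n
        _ ≤ (n+1) * 1 * C * (1 - lam) ^ (n+1) := by
            apply mul_le_mul_of_nonneg_right _ (by positivity)
            apply mul_le_mul_of_nonneg_right _ hCpos.le
            exact mul_le_mul_of_nonneg_left (hbin (n+1) (by omega)) (by positivity)
        _ = C * (((n:ℝ)+1) * (1 - lam) ^ (n+1)) := by ring
    · simpa using htend0.const_mul C
  -- telescoping bound
  have hstep : ∀ n, K ≤ n → |R K| ≤ (1 - lam) ^ (K+1) / lam + |R n| := by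
    intro n hn
    have hsplit : R K - R n = ∑ k ∈ Finset.Ico (K+1) (n+1), genBinom β k * (lam - 1) ^ k := by
      simp only [hR]
      rw [Finset.range_eq_Ico, Finset.range_eq_Ico,
        ← Finset.sum_Ico_consecutive _ (Nat.zero_le (K+1)) (by omega : K+1 ≤ n+1)]
      ring
    have habs : |∑ k ∈ Finset.Ico (K+1) (n+1), genBinom β k * (lam - 1) ^ k|
        ≤ (1 - lam) ^ (K+1) / lam := by
      calc |∑ k ∈ Finset.Ico (K+1) (n+1), genBinom β k * (lam - 1) ^ k|
          ≤ ∑ k ∈ Finset.Ico (K+1) (n+1), |genBinom β k * (lam - 1) ^ k| :=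
            Finset.abs_sum_le_sum_abs _ _
        _ ≤ ∑ k ∈ Finset.Ico (K+1) (n+1), (1 - lam) ^ k := by
            apply Finset.sum_le_sum
            intro k hk
            rw [abs_mul, abs_pow]
            have : |lam - 1| = 1 - lam := by rw [abs_sub_comm, abs_of_nonneg hr0]
            rw [this]
            have hb := hbin k (by simp at hk; omega)
            exact mul_le_of_le_one_left (by positivity) hb
        _ ≤ (1 - lam) ^ (K+1) / lam := by
            rw [Finset.sum_Ico_eq_sum_range]
            have heq : ∀ j, (1 - lam) ^ (K + 1 + j) = (1 - lam) ^ (K+1) * (1-lam) ^ j :=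
              fun j => pow_add _ _ _
            simp_rw [heq, ← Finset.mul_sum]
            rw [div_eq_mul_inv]
            apply mul_le_mul_of_nonneg_left _ (by positivity)
            have : (Finset.range (n + 1 - (K + 1))).sum (fun j => (1-lam) ^ j)
                ≤ ∑' j : ℕ, (1 - lam) ^ j := by
              apply Summable.sum_le_tsum _ (fun j _ => by positivity)
              exact summable_geometric_of_lt_one hr0 hr1
            rw [tsum_geometric_of_lt_one hr0 hr1] at this
            simpa using this
    calc |R K| = |(R K - R n) + R n| := by rw [sub_add_cancel]
      _ ≤ |R K - R n| + |R n| := abs_add_le _ _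
      _ ≤ (1 - lam) ^ (K+1) / lam + |R n| := by rw [hsplit]; linarith [habs]
  -- take the limit
  have : Tendsto (fun n => (1 - lam) ^ (K+1) / lam + |R n|) atTop
      (nhds ((1 - lam) ^ (K+1) / lam)) := by
    simpa using (tendsto_const_nhds.add hRtend)
  exact ge_of_tendsto this (Filter.eventually_atTop.mpr ⟨K, hstep⟩)

/-- trace of `ρ (ρ-1)^k` in terms of eigenvalues. -/
lemma trace_eig (d : ℕ) (ρ : Matrix (Fin d) (Fin d) ℂ) (hρ : ρ.PosSemidef) (k : ℕ) :
    (ρ * (ρ - 1) ^ k).trace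
      = ((∑ j, hρ.1.eigenvalues j * (hρ.1.eigenvalues j - 1) ^ k : ℝ) : ℂ) := by
  set U : Matrix (Fin d) (Fin d) ℂ := (hρ.1.eigenvectorUnitary : Matrix (Fin d) (Fin d) ℂ) with hU
  have hUU : U * star U = 1 := (Matrix.mem_unitaryGroup_iff).mp hρ.1.eigenvectorUnitary.2
  have hUU' : star U * U = 1 := (Matrix.mem_unitaryGroup_iff').mp hρ.1.eigenvectorUnitary.2
  set D : Matrix (Fin d) (Fin d) ℂ :=
    Matrix.diagonal (RCLike.ofReal ∘ hρ.1.eigenvalues) with hD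
  have hspec : ρ = U * D * star U := hρ.1.spectral_theorem
  have hone : (1 : Matrix (Fin d) (Fin d) ℂ) = U * 1 * star U := by
    rw [mul_one, hUU]
  have hsub : ρ - 1 = U * (D - 1) * star U := by
    rw [Matrix.mul_sub, Matrix.mul_one, Matrix.sub_mul, hUU, ← hspec]
  have hpow : (ρ - 1) ^ k = U * (D - 1) ^ k * star U := by
    rw [hsub]
    induction k with
    | zero => simp [hUU]
    | succ m ih =>
      rw [pow_succ, pow_succ, ih]
      calc U * (D - 1) ^ m * star U * (U * (D - 1) * star U)
          = U * (D - 1) ^ m * (star U * U) * (D - 1) * star U := by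
            simp only [Matrix.mul_assoc]
        _ = U * ((D - 1) ^ m * (D - 1)) * star U := by
            rw [hUU']; simp only [Matrix.mul_one, Matrix.mul_assoc]
  have hfull : ρ * (ρ - 1) ^ k = U * (D * (D - 1) ^ k) * star U := by
    rw [hpow, hspec]
    calc U * D * star U * (U * (D - 1) ^ k * star U)
        = U * D * (star U * U) * (D - 1) ^ k * star U := by simp only [Matrix.mul_assoc]
      _ = U * (D * (D - 1) ^ k) * star U := by
          rw [hUU']; simp only [Matrix.mul_one, Matrix.mul_assoc]
  rw [hfull, Matrix.trace_mul_cycle, ← Matrix.mul_assoc, hUU', Matrix.one_mul]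
  have hD1 : D - 1 = Matrix.diagonal (fun j => ((hρ.1.eigenvalues j : ℂ) - 1)) := by
    rw [hD, ← Matrix.diagonal_one, Matrix.diagonal_sub]
    rfl
  rw [hD1, hD]
  rw [Matrix.diagonal_pow, Matrix.diagonal_mul_diagonal, Matrix.trace_diagonal]
  push_cast
  rfl

/-- truncated Taylor series approximation of `tr(ρ^α) = ∑_j λ_j^α`.
Real powers `λ ^ α` are `Real.rpow`, which satisfies `0 ^ α = 0` for `α ≠ 0`. -/
theorem stmt_7 (d : ℕ) (Λ : ℝ) (hΛ : Λ ∈ Set.Ioo (0 : ℝ) 1)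
    (α : ℝ) (hα : 0 < α) (hα1 : α ≠ 1) (β : ℝ) (hβ : β = α - 1)
    (ρ : Matrix (Fin d) (Fin d) ℂ) (hρ : ρ.PosSemidef) (htr : ρ.trace = 1)
    (heig : ∀ j, hρ.1.eigenvalues j = 0 ∨ Λ ≤ hρ.1.eigenvalues j)
    (K : ℕ) (hK : 1 ≤ K) (hbin : ∀ k : ℕ, K < k → |genBinom β k| ≤ 1) :
    |(∑ j, hρ.1.eigenvalues j ^ α) - 1 -
        ∑ k ∈ Finset.Icc 1 K, genBinom β k * ((ρ * (ρ - 1) ^ k).trace).re|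
      ≤ (1 - Λ) ^ (K + 1) / Λ := by
  obtain ⟨hΛ0, hΛ1⟩ := hΛ
  set E : Fin d → ℝ := hρ.1.eigenvalues with hE
  have htrre : ∀ k : ℕ, ((ρ * (ρ - 1) ^ k).trace).re = ∑ j, E j * (E j - 1) ^ k := by
    intro k
    rw [trace_eig d ρ hρ k]
    exact Complex.ofReal_re _
  have hsum1 : ∑ j, E j = 1 := by
    have h0 := trace_eig d ρ hρ 0
    simp only [pow_zero, mul_one] at h0
    rw [htr] at h0
    have := congrArg Complex.re h0
    simpa using this.symm
  have hnn : ∀ j, 0 ≤ E j := fun j => hρ.eigenvalues_nonneg j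
  have hle1 : ∀ j, E j ≤ 1 := by
    intro j
    rw [← hsum1]
    exact Finset.single_le_sum (fun i _ => hnn i) (Finset.mem_univ j)
  -- rewrite the expression as a single sum over eigenvalues
  set M : ℝ := (1 - Λ) ^ (K+1) / Λ with hM
  set c : ℕ → ℝ := genBinom β with hc
  set T : ℕ → ℝ := fun k => ∑ j, E j * (E j - 1) ^ k with hT
  have hsplit : ∑ k ∈ Finset.range (K+1), c k * T k = 1 + ∑ k ∈ Finset.Icc 1 K, c k * T k := by
    rw [Finset.sum_range_succ']
    have h0 : c 0 * T 0 = 1 := by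
      simp only [hc, hT, genBinom, pow_zero, mul_one]
      simp [hsum1]
    rw [h0]
    have hIcc : Finset.Icc 1 K = Finset.Ico 1 (K+1) := by
      ext x; simp [Nat.lt_succ_iff]
    rw [hIcc, Finset.sum_Ico_eq_sum_range]
    simp only [add_comm 1]
    rw [Nat.add_sub_cancel]
    ring
  have hswap : ∑ k ∈ Finset.range (K+1), c k * T k
      = ∑ j, ∑ k ∈ Finset.range (K+1), c k * (E j * (E j - 1) ^ k) := by
    simp only [hT, Finset.mul_sum]
    rw [Finset.sum_comm]
  have hrewrite : (∑ j, E j ^ α) - 1 -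
      ∑ k ∈ Finset.Icc 1 K, genBinom β k * ((ρ * (ρ - 1) ^ k).trace).re
      = ∑ j, (E j ^ α - ∑ k ∈ Finset.range (K+1), c k * (E j * (E j - 1) ^ k)) := by
    have : ∑ k ∈ Finset.Icc 1 K, genBinom β k * ((ρ * (ρ - 1) ^ k).trace).re
        = ∑ k ∈ Finset.Icc 1 K, c k * T k := by
      apply Finset.sum_congr rfl
      intro k _
      rw [htrre k]
    rw [this, Finset.sum_sub_distrib, ← hswap, hsplit]
    ring
  rw [hrewrite]
  -- per-eigenvalue bound
  have hperj : ∀ j, |E j ^ α - ∑ k ∈ Finset.range (K+1), c k * (E j * (E j - 1) ^ k)|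
      ≤ E j * M := by
    intro j
    rcases heig j with h0 | hΛle
    · rw [hE] at h0
      rw [show E j = hρ.1.eigenvalues j from rfl, h0]
      rw [Real.zero_rpow hα.ne']
      simp
    · have hj0 : 0 < E j := lt_of_lt_of_le hΛ0 hΛle
      have hj1 : E j ≤ 1 := hle1 j
      have hfac : ∑ k ∈ Finset.range (K+1), c k * (E j * (E j - 1) ^ k)
          = E j * ∑ k ∈ Finset.range (K+1), c k * (E j - 1) ^ k := by
        rw [Finset.mul_sum]; apply Finset.sum_congr rfl; intro k _; ring
      have hpowα : E j ^ α = E j * E j ^ β := by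
        rw [hβ]
        rw [show α = 1 + (α - 1) by ring, Real.rpow_add hj0, Real.rpow_one,
          show (1:ℝ) + (α - 1) - 1 = α - 1 by ring]
      rw [hfac, hpowα, ← mul_sub, abs_mul, abs_of_pos hj0]
      have htail := binom_tail β (E j) hj0 hj1 K hbin
      calc E j * |E j ^ β - ∑ k ∈ Finset.range (K+1), genBinom β k * (E j - 1) ^ k|
          ≤ E j * ((1 - E j) ^ (K+1) / E j) := by
            exact mul_le_mul_of_nonneg_left htail hj0.le
        _ = (1 - E j) ^ (K+1) := by field_simp
        _ ≤ (1 - Λ) ^ (K+1) := by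
            apply pow_le_pow_left₀ (by linarith) (by linarith)
        _ = Λ * M := by rw [hM]; field_simp
        _ ≤ E j * M := by
            apply mul_le_mul_of_nonneg_right hΛle
            rw [hM]
            exact div_nonneg (pow_nonneg (by linarith) _) hΛ0.le
  calc |∑ j, (E j ^ α - ∑ k ∈ Finset.range (K+1), c k * (E j * (E j - 1) ^ k))|
      ≤ ∑ j, |E j ^ α - ∑ k ∈ Finset.range (K+1), c k * (E j * (E j - 1) ^ k)| :=
        Finset.abs_sum_le_sum_abs _ _
    _ ≤ ∑ j, E j * M := Finset.sum_le_sum (fun j _ => hperj j)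
    _ = M := by rw [← Finset.sum_mul, hsum1, one_mul]
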